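/- Let m ≥ 1 and define A_m = m·C(2m, m) and B_m = 2m·∑_{ℓ=0}^{m-1} (2m - 2ℓ - 1)·C(m-1, ℓ)·C(m, ℓ). Then B_m = ((2m² - 2m + 1)/(2m - 1))·A_m. -/

import Mathlib

open Finset

lemma vand_sq (n : ℕ) :
    ∑ ℓ ∈ Finset.range (n + 1), n.choose ℓ * n.choose ℓ = (2 * n).choose n := by
  rw [show 2 * n = n + n by ring, Nat.add_choose_eq,
    Finset.Nat.sum_antidiagonal_eq_sum_range_succ_mk]
  refine Finset.sum_congr rfl fun ℓ hℓ => ?_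
  have h : ℓ ≤ n := by simpa [Nat.lt_succ_iff] using hℓ
  rw [Nat.choose_symm h]

lemma vand_T (n : ℕ) :
    ∑ ℓ ∈ Finset.range (n + 1), n.choose ℓ * (n + 1).choose ℓ = (2 * n + 1).choose n := by
  rw [show 2 * n + 1 = (n + 1) + n by ring, Nat.add_choose_eq,
    Finset.Nat.sum_antidiagonal_eq_sum_range_succ_mk]
  refine Finset.sum_congr rfl fun ℓ hℓ => ?_
  have h : ℓ ≤ n := by simpa [Nat.lt_succ_iff] using hℓ
  rw [Nat.choose_symm h, mul_comm]

lemma choose_symm_half (n : ℕ) : (2 * n + 1).choose (n + 1) = (2 * n + 1).choose n := by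
  have := Nat.choose_symm (n := 2 * n + 1) (k := n + 1) (by omega)
  simpa [show 2 * n + 1 - (n + 1) = n by omega] using this.symm

lemma rel1 (n : ℕ) : (n + 1) * (2 * n + 1).choose n = (2 * n + 1) * (2 * n).choose n := by
  have h := Nat.add_one_mul_choose_eq (2 * n) n
  rw [choose_symm_half n] at h
  rw [mul_comm]; exact h.symm

lemma rel2 (n : ℕ) : (2 * n + 2).choose (n + 1) = 2 * (2 * n + 1).choose n := by
  rw [show 2 * n + 2 = (2 * n + 1) + 1 by ring]
  have h := Nat.choose_succ_succ (2 * n + 1) n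
  simp only [Nat.succ_eq_add_one] at h
  rw [h, choose_symm_half n]
  omega

theorem stmt_2 (m : ℕ) (hm : 1 ≤ m)
    (A B : ℝ)
    (hA : A = (m : ℝ) * Nat.choose (2 * m) m)
    (hB : B = 2 * (m : ℝ) *
      ∑ ℓ ∈ Finset.range m, (2 * (m : ℝ) - 2 * ℓ - 1) * Nat.choose (m - 1) ℓ * Nat.choose m ℓ) :
    B = ((2 * (m : ℝ) ^ 2 - 2 * m + 1) / (2 * m - 1)) * A := by
  obtain ⟨n, rfl⟩ : ∃ n, m = n + 1 := ⟨m - 1, by omega⟩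
  subst hA hB
  simp only [Nat.add_sub_cancel]
  push_cast
  set U : ℝ := ((2 * n).choose n : ℝ) with hUdef
  set T : ℝ := ((2 * n + 1).choose n : ℝ) with hTdef
  have hU : (∑ ℓ ∈ Finset.range (n + 1), (n.choose ℓ : ℝ) * n.choose ℓ) = U := by
    rw [hUdef, ← vand_sq n]; push_cast; ring
  have hT : (∑ ℓ ∈ Finset.range (n + 1), (n.choose ℓ : ℝ) * (n + 1).choose ℓ) = T := by
    rw [hTdef, ← vand_T n]; push_cast; ring
  have hS : (∑ ℓ ∈ Finset.range (n + 1),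
      (2 * ((n:ℝ) + 1) - 2 * ℓ - 1) * (n.choose ℓ : ℝ) * ((n+1).choose ℓ : ℝ))
      = 2 * ((n:ℝ) + 1) * U - T := by
    have step : (∑ ℓ ∈ Finset.range (n + 1),
        (2 * ((n:ℝ) + 1) - 2 * ℓ - 1) * (n.choose ℓ : ℝ) * ((n+1).choose ℓ : ℝ))
        = ∑ ℓ ∈ Finset.range (n + 1),
          (2 * ((n:ℝ) + 1) * ((n.choose ℓ : ℝ) * n.choose ℓ)
            - (n.choose ℓ : ℝ) * ((n+1).choose ℓ : ℝ)) := by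
      refine Finset.sum_congr rfl fun ℓ hℓ => ?_
      have hℓn : ℓ ≤ n := by simpa [Nat.lt_succ_iff] using hℓ
      have key := Nat.choose_mul_succ_eq n ℓ
      have hc : ((n + 1 - ℓ : ℕ) : ℝ) = (n : ℝ) + 1 - ℓ := by
        have hle : ℓ ≤ n + 1 := by omega
        push_cast [Nat.cast_sub hle]; ring
      have keyR : ((n.choose ℓ : ℝ)) * ((n : ℝ) + 1)
          = ((n+1).choose ℓ : ℝ) * ((n : ℝ) + 1 - ℓ) := by
        have h2 := congrArg (Nat.cast : ℕ → ℝ) key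
        push_cast at h2
        rw [hc] at h2
        exact h2
      nlinarith [keyR]
    rw [step, Finset.sum_sub_distrib, ← Finset.mul_sum, hU, hT]
  have hr1 : ((n : ℝ) + 1) * T = (2 * (n:ℝ) + 1) * U := by
    have h2 := congrArg (Nat.cast : ℕ → ℝ) (rel1 n)
    push_cast at h2
    rw [hUdef, hTdef]; push_cast; linarith [h2]
  have hr2 : ((Nat.choose (2 * (n + 1)) (n + 1) : ℕ) : ℝ) = 2 * T := by
    rw [show 2 * (n + 1) = 2 * n + 2 by ring, rel2 n, hTdef]; push_cast; ring
  rw [hS, hr2]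
  have hne : (2 * ((n:ℝ) + 1) - 1) ≠ 0 := by
    have : (0:ℝ) ≤ (n:ℝ) := Nat.cast_nonneg n
    intro h; linarith
  rw [div_mul_eq_mul_div, eq_div_iff hne]
  linear_combination (-4 * ((n:ℝ) + 1) ^ 2) * hr1
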